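/- Let S : (0,1) → ℝ^{p×p} be a measurable, Bochner integrable family of real symmetric positive semidefinite matrices, and let w : (0,1) → ℝ be measurable with 0 ≤ w(τ) ≤ 1 for all τ and w(τ) > 0 whenever S(τ) ≠ 0. Then the weighted composite matrix Σ_w = ∫₀¹ w(τ) S(τ) dτ and the unweighted composite matrix Σ = ∫₀¹ S(τ) dτ have the same kernel, and hence the same column space. -/

import Mathlib

open MeasureTheory
open scoped Matrix

section Helpers

private lemma aux_range_ker {E : Type*} [NormedAddCommGroup E] [InnerProductSpace ℝ E]
    [FiniteDimensional ℝ E] {T : E →ₗ[ℝ] E} (hT : T.IsSymmetric) :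
    LinearMap.range T = (LinearMap.ker T)ᗮ := by
  apply Submodule.eq_of_le_of_finrank_eq
  · rintro _ ⟨x, rfl⟩
    rw [Submodule.mem_orthogonal]
    intro u hu
    rw [← hT u x, LinearMap.mem_ker.mp hu, inner_zero_left]
  · have h1 := LinearMap.finrank_range_add_finrank_ker T
    have h2 := Submodule.finrank_add_finrank_orthogonal (LinearMap.ker T)
    omega

private lemma matrix_range_eq_of_ker_eq {p : ℕ} {M N : Matrix (Fin p) (Fin p) ℝ}
    (hM : M.IsHermitian) (hN : N.IsHermitian)
    (h : LinearMap.ker M.mulVecLin = LinearMap.ker N.mulVecLin) :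
    LinearMap.range M.mulVecLin = LinearMap.range N.mulVecLin := by
  set e : EuclideanSpace ℝ (Fin p) ≃ₗ[ℝ] (Fin p → ℝ) := WithLp.linearEquiv 2 ℝ (Fin p → ℝ)
  have hco : ∀ A : Matrix (Fin p) (Fin p) ℝ,
      Matrix.toEuclideanLin A = e.symm.toLinearMap ∘ₗ A.mulVecLin ∘ₗ e.toLinearMap := by
    intro A; ext x i; rfl
  have hker : ∀ A : Matrix (Fin p) (Fin p) ℝ,
      LinearMap.ker (Matrix.toEuclideanLin A)
        = Submodule.comap e.toLinearMap (LinearMap.ker A.mulVecLin) := by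
    intro A
    ext x
    simp [hco, LinearMap.mem_ker, LinearEquiv.map_eq_zero_iff]
  have hrange : ∀ A : Matrix (Fin p) (Fin p) ℝ,
      LinearMap.range (Matrix.toEuclideanLin A)
        = Submodule.map e.symm.toLinearMap (LinearMap.range A.mulVecLin) := by
    intro A
    ext y
    simp only [hco, LinearMap.mem_range, Submodule.mem_map, LinearMap.coe_comp,
      Function.comp_apply, LinearEquiv.coe_coe]
    constructor
    · rintro ⟨x, rfl⟩
      exact ⟨A.mulVecLin (e x), ⟨e x, rfl⟩, rfl⟩
    · rintro ⟨z, ⟨x, rfl⟩, rfl⟩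
      exact ⟨e.symm x, by simp⟩
  have key : ∀ A : Matrix (Fin p) (Fin p) ℝ, A.IsHermitian →
      Submodule.map e.symm.toLinearMap (LinearMap.range A.mulVecLin)
        = (Submodule.comap e.toLinearMap (LinearMap.ker A.mulVecLin))ᗮ := by
    intro A hA
    rw [← hrange, ← hker]
    exact aux_range_ker ((Matrix.isHermitian_iff_isSymmetric).mp hA)
  have h1 := key M hM
  have h2 := key N hN
  rw [h] at h1
  exact Submodule.map_injective_of_injective e.symm.injective (h1.trans h2.symm)

variable {p : ℕ}

private lemma mulVec_integral (f : ℝ → Matrix (Fin p) (Fin p) ℝ)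
    (hf : ∀ i j, IntegrableOn (fun τ => f τ i j) (Set.Ioo 0 1) volume)
    (v : Fin p → ℝ) (i : Fin p) :
    ((Matrix.of fun i j => ∫ τ in Set.Ioo (0 : ℝ) 1, f τ i j) *ᵥ v) i
      = ∫ τ in Set.Ioo (0 : ℝ) 1, (f τ *ᵥ v) i := by
  simp only [Matrix.mulVec, dotProduct, Matrix.of_apply]
  simp_rw [← integral_mul_const]
  rw [← integral_finset_sum]
  exact fun j _ => (hf i j).mul_const (v j)

private lemma mulVec_entry_integrable (f : ℝ → Matrix (Fin p) (Fin p) ℝ)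
    (hf : ∀ i j, IntegrableOn (fun τ => f τ i j) (Set.Ioo 0 1) volume)
    (v : Fin p → ℝ) (i : Fin p) :
    IntegrableOn (fun τ => (f τ *ᵥ v) i) (Set.Ioo 0 1) volume := by
  simp only [Matrix.mulVec, dotProduct]
  exact integrable_finset_sum _ fun j _ => (hf i j).mul_const (v j)

private lemma dot_integral (f : ℝ → Matrix (Fin p) (Fin p) ℝ)
    (hf : ∀ i j, IntegrableOn (fun τ => f τ i j) (Set.Ioo 0 1) volume)
    (v : Fin p → ℝ) :
    v ⬝ᵥ ((Matrix.of fun i j => ∫ τ in Set.Ioo (0 : ℝ) 1, f τ i j) *ᵥ v)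
      = ∫ τ in Set.Ioo (0 : ℝ) 1, v ⬝ᵥ (f τ *ᵥ v) := by
  simp only [dotProduct]
  simp_rw [mulVec_integral f hf v, ← integral_const_mul]
  rw [← integral_finset_sum]
  exact fun i _ => (mulVec_entry_integrable f hf v i).const_mul (v i)

/-- a.e. characterization of the kernel of the integrated matrix. -/
private lemma integral_mulVec_eq_zero_iff (f : ℝ → Matrix (Fin p) (Fin p) ℝ)
    (hf : ∀ i j, IntegrableOn (fun τ => f τ i j) (Set.Ioo 0 1) volume)
    (hfpsd : ∀ τ ∈ Set.Ioo (0 : ℝ) 1, (f τ).PosSemidef) (v : Fin p → ℝ) :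
    (Matrix.of fun i j => ∫ τ in Set.Ioo (0 : ℝ) 1, f τ i j) *ᵥ v = 0
      ↔ (∀ᵐ τ ∂(volume.restrict (Set.Ioo (0 : ℝ) 1)), f τ *ᵥ v = 0) := by
  constructor
  · intro h
    have hq0 : ∫ τ in Set.Ioo (0 : ℝ) 1, v ⬝ᵥ (f τ *ᵥ v) = 0 := by
      rw [← dot_integral f hf v, h, dotProduct_zero]
    have hqint : IntegrableOn (fun τ => v ⬝ᵥ (f τ *ᵥ v)) (Set.Ioo 0 1) volume := by
      simp only [dotProduct]
      exact integrable_finset_sum _ fun i _ => (mulVec_entry_integrable f hf v i).const_mul (v i)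
    have hnn : 0 ≤ᵐ[volume.restrict (Set.Ioo (0 : ℝ) 1)] fun τ => v ⬝ᵥ (f τ *ᵥ v) := by
      filter_upwards [ae_restrict_mem measurableSet_Ioo] with τ hτ
      simpa [star_trivial] using (hfpsd τ hτ).dotProduct_mulVec_nonneg v
    have hae := (integral_eq_zero_iff_of_nonneg_ae hnn hqint).mp hq0
    filter_upwards [hae, ae_restrict_mem measurableSet_Ioo] with τ h1 h2
    exact ((hfpsd τ h2).dotProduct_mulVec_zero_iff v).mp (by rw [star_trivial]; exact h1)
  · intro h
    funext i
    rw [mulVec_integral f hf v i, Pi.zero_apply]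
    rw [integral_congr_ae (h.mono fun τ h0 => by rw [h0, Pi.zero_apply]), integral_zero]

end Helpers

/-- Let `S : (0,1) → ℝ^{p×p}` be a measurable, integrable family of symmetric positive
semidefinite matrices and `w : (0,1) → [0,1]` a measurable weight with `w(τ) > 0`
whenever `S(τ) ≠ 0`.  Then the weighted composite matrix `Σ_w = ∫₀¹ w(τ) S(τ) dτ` and
the unweighted composite matrix `Σ = ∫₀¹ S(τ) dτ` have the same kernel, and hence the
same column space. -/
theorem weighted_composite_matrix_same_kernel_and_column_space
    {p : ℕ} (S : ℝ → Matrix (Fin p) (Fin p) ℝ)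
    (hmeas : ∀ i j, Measurable fun τ => S τ i j)
    (hint : ∀ i j, IntegrableOn (fun τ => S τ i j) (Set.Ioo 0 1) volume)
    (hpsd : ∀ τ ∈ Set.Ioo (0 : ℝ) 1, (S τ).PosSemidef)
    (w : ℝ → ℝ) (hw_meas : Measurable w)
    (hw01 : ∀ τ, 0 ≤ w τ ∧ w τ ≤ 1)
    (hw_pos : ∀ τ ∈ Set.Ioo (0 : ℝ) 1, S τ ≠ 0 → 0 < w τ) :
    LinearMap.ker
        (Matrix.of fun i j => ∫ τ in Set.Ioo (0 : ℝ) 1, w τ * S τ i j).mulVecLin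
      = LinearMap.ker
        (Matrix.of fun i j => ∫ τ in Set.Ioo (0 : ℝ) 1, S τ i j).mulVecLin
    ∧ LinearMap.range
        (Matrix.of fun i j => ∫ τ in Set.Ioo (0 : ℝ) 1, w τ * S τ i j).mulVecLin
      = LinearMap.range
        (Matrix.of fun i j => ∫ τ in Set.Ioo (0 : ℝ) 1, S τ i j).mulVecLin := by
  set Sw : ℝ → Matrix (Fin p) (Fin p) ℝ := fun τ => w τ • S τ with hSw
  have hSw_apply : ∀ τ i j, Sw τ i j = w τ * S τ i j := fun τ i j => rfl
  have hintw : ∀ i j, IntegrableOn (fun τ => Sw τ i j) (Set.Ioo 0 1) volume := by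
    intro i j
    refine Integrable.mono (hint i j)
      ((hw_meas.mul (hmeas i j)).aestronglyMeasurable) ?_
    filter_upwards with τ
    rw [hSw_apply, norm_mul]
    have h1 : ‖w τ‖ ≤ 1 := by
      rw [Real.norm_eq_abs, abs_of_nonneg (hw01 τ).1]; exact (hw01 τ).2
    calc ‖w τ‖ * ‖S τ i j‖ ≤ 1 * ‖S τ i j‖ := by gcongr
      _ = ‖S τ i j‖ := one_mul _
  have hpsdw : ∀ τ ∈ Set.Ioo (0 : ℝ) 1, (Sw τ).PosSemidef := by
    intro τ hτ
    refine Matrix.PosSemidef.of_dotProduct_mulVec_nonneg (Matrix.IsHermitian.ext fun i j => ?_) fun x => ?_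
    · rw [hSw_apply, hSw_apply, star_trivial, ← (hpsd τ hτ).1.apply i j, star_trivial]
    · rw [hSw, Matrix.smul_mulVec, dotProduct_smul, smul_eq_mul]
      exact mul_nonneg (hw01 τ).1 ((hpsd τ hτ).dotProduct_mulVec_nonneg x)
  have hmatw : (Matrix.of fun i j => ∫ τ in Set.Ioo (0 : ℝ) 1, w τ * S τ i j)
      = Matrix.of fun i j => ∫ τ in Set.Ioo (0 : ℝ) 1, Sw τ i j := rfl
  -- the a.e. conditions agree
  have hae_iff : ∀ v : Fin p → ℝ,
      (∀ᵐ τ ∂(volume.restrict (Set.Ioo (0 : ℝ) 1)), Sw τ *ᵥ v = 0)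
        ↔ (∀ᵐ τ ∂(volume.restrict (Set.Ioo (0 : ℝ) 1)), S τ *ᵥ v = 0) := by
    intro v
    constructor
    · intro h
      filter_upwards [h, ae_restrict_mem measurableSet_Ioo] with τ h1 h2
      by_contra hne
      have hSne : S τ ≠ 0 := fun h0 => hne (by rw [h0, Matrix.zero_mulVec])
      have hw := hw_pos τ h2 hSne
      rw [hSw, Matrix.smul_mulVec, smul_eq_zero] at h1
      exact hne (h1.resolve_left (ne_of_gt hw))
    · intro h
      filter_upwards [h] with τ h1
      rw [hSw, Matrix.smul_mulVec, h1, smul_zero]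
  have hkereq : LinearMap.ker
        (Matrix.of fun i j => ∫ τ in Set.Ioo (0 : ℝ) 1, w τ * S τ i j).mulVecLin
      = LinearMap.ker
        (Matrix.of fun i j => ∫ τ in Set.Ioo (0 : ℝ) 1, S τ i j).mulVecLin := by
    ext v
    simp only [LinearMap.mem_ker, Matrix.mulVecLin_apply, hmatw]
    rw [integral_mulVec_eq_zero_iff Sw hintw hpsdw v,
      integral_mulVec_eq_zero_iff S hint hpsd v, hae_iff v]
  refine ⟨hkereq, matrix_range_eq_of_ker_eq ?_ ?_ hkereq⟩
  · rw [Matrix.IsHermitian, hmatw]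
    ext i j
    simp only [Matrix.conjTranspose_apply, Matrix.of_apply, star_trivial]
    refine setIntegral_congr_fun measurableSet_Ioo fun τ hτ => ?_
    rw [hSw_apply, hSw_apply, ← (hpsd τ hτ).1.apply i j, star_trivial]
  · rw [Matrix.IsHermitian]
    ext i j
    simp only [Matrix.conjTranspose_apply, Matrix.of_apply, star_trivial]
    refine setIntegral_congr_fun measurableSet_Ioo fun τ hτ => ?_
    rw [← (hpsd τ hτ).1.apply i j, star_trivial]
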